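/- Under the same setting as the previous lower bound with d ≥ κ + 1 (so L/(μ(d-1)) ≤ 1), the iterates satisfy f(w_T) - f(w_*) ≥ (f(w_0) - f(w_*))/2 · exp(-8T/κ), where w_* = 0 is the minimizer. -/
import Mathlib

open Matrix

lemma aux_exp_le (κ : ℝ) (hκ : 4 ≤ κ) : Real.exp (-4/κ) ≤ 1 - 2/κ := by
  have hκ0 : 0 < κ := by linarith
  have h1 : 4/κ + 1 ≤ Real.exp (4/κ) := Real.add_one_le_exp _
  have h2 : (0:ℝ) < 1 + 4/κ := by positivity
  have h3 : 1/(1 + 4/κ) ≤ 1 - 2/κ := by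
    rw [div_le_iff₀ h2]
    have h4 : 4 * κ ≤ κ * κ := by nlinarith
    have h5 : (1 - 2/κ) * (1 + 4/κ) = 1 + 2/κ - 8/(κ*κ) := by field_simp; ring
    rw [h5]
    have h6 : 8/(κ*κ) ≤ 2/κ := by
      rw [div_le_div_iff₀ (by positivity) hκ0]; nlinarith
    linarith
  refine le_trans ?_ h3
  have : (-4/κ : ℝ) = -(4/κ) := by ring
  rw [this, Real.exp_neg, one_div]
  exact inv_anti₀ h2 (by linarith)

theorem sgd_lower_bound_excess_risk
    (d : ℕ) (hd : 2 ≤ d) (L μ κ c0 : ℝ) (hL : 0 < L) (hκ : 4 ≤ κ)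
    (hμ : μ = L / κ) (hc0 : c0 ≠ 0)
    (hdκ : (d : ℝ) ≥ κ + 1)
    (H : Matrix (Fin d) (Fin d) ℝ)
    (hH : H = Matrix.diagonal (fun i => if i = ⟨0, by omega⟩ then L else μ))
    (η : ℕ → ℝ) (hη : ∀ t, 0 ≤ η t ∧ η t ≤ 2 / L)
    (w : ℕ → Fin d → ℝ)
    (hw0 : w 0 = fun _ => c0)
    (hrec : ∀ t, w (t + 1) = ((1 : Matrix (Fin d) (Fin d) ℝ) - η t • H).mulVec (w t))
    (f : (Fin d → ℝ) → ℝ) (hf : f = fun x => (1 / 2) * (x ⬝ᵥ H.mulVec x))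
    (wstar : Fin d → ℝ) (hwstar : wstar = 0)
    (T : ℕ) :
    f (w T) - f wstar ≥ (f (w 0) - f wstar) / 2 * Real.exp (-8 * T / κ) := by
  have hκ0 : (0:ℝ) < κ := by linarith
  have hμ0 : 0 < μ := by rw [hμ]; positivity
  set i0 : Fin d := ⟨0, by omega⟩ with hi0
  set D : Fin d → ℝ := fun i => if i = i0 then L else μ with hD
  -- f* = 0
  have hfstar : f wstar = 0 := by
    subst hf hwstar; simp
  -- f evaluated
  have hfval : ∀ x, f x = (1/2) * ∑ i, D i * (x i)^2 := by
    intro x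
    subst hf hH
    simp only [dotProduct, Matrix.mulVec_diagonal]
    congr 1
    apply Finset.sum_congr rfl
    intro i _
    ring
  -- coordinate recursion
  have hcoord : ∀ t i, w (t+1) i = (1 - η t * D i) * w t i := by
    intro t i
    rw [hrec]
    simp only [Matrix.sub_mulVec, Matrix.one_mulVec, Matrix.smul_mulVec, hH,
      Matrix.mulVec_diagonal, Pi.sub_apply, Pi.smul_apply, smul_eq_mul]
    ring
  -- for i ≠ i0, closed form
  have hQ : ∀ t (i : Fin d), i ≠ i0 →
      w t i = c0 * ∏ s ∈ Finset.range t, (1 - η s * μ) := by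
    intro t i hi
    induction t with
    | zero => rw [hw0]; simp
    | succ t ih =>
      rw [hcoord, ih, Finset.prod_range_succ, hD]
      simp only [if_neg hi]
      ring
  -- each factor bound
  have hfac : ∀ s, 1 - 2/κ ≤ 1 - η s * μ := by
    intro s
    have h1 : η s * μ ≤ (2/L) * μ :=
      mul_le_mul_of_nonneg_right (hη s).2 hμ0.le
    have h2 : (2/L) * μ = 2/κ := by rw [hμ]; field_simp
    linarith [h1.trans_eq h2]
  have hhalf : (0:ℝ) ≤ 1 - 2/κ := by
    have : 2/κ ≤ 1/2 := by rw [div_le_div_iff₀ hκ0 (by norm_num)]; linarith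
    linarith
  have hprod : ∀ t, (1 - 2/κ)^t ≤ ∏ s ∈ Finset.range t, (1 - η s * μ) := by
    intro t
    calc (1 - 2/κ)^t = ∏ s ∈ Finset.range t, (1 - 2/κ) := by
            rw [Finset.prod_const, Finset.card_range]
      _ ≤ _ := Finset.prod_le_prod (fun _ _ => hhalf) (fun s _ => hfac s)
  -- squared coordinate lower bound
  have hsq : ∀ (i : Fin d), i ≠ i0 →
      c0^2 * ((1 - 2/κ)^T)^2 ≤ (w T i)^2 := by
    intro i hi
    rw [hQ T i hi, mul_pow]
    have h1 : ((1 - 2/κ)^T)^2 ≤ (∏ s ∈ Finset.range T, (1 - η s * μ))^2 := by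
      apply pow_le_pow_left₀ (pow_nonneg hhalf T) (hprod T)
    nlinarith [sq_nonneg c0]
  -- lower bound on f (w T)
  have hc02 : 0 < c0^2 := by positivity
  have hEs : Real.exp (-8 * T / κ) ≤ ((1 - 2/κ)^T)^2 := by
    have h1 : (-8 * (T:ℝ) / κ) = (2*T : ℕ) * (-4/κ) := by push_cast; ring
    rw [h1, Real.exp_nat_mul, ← pow_mul, Nat.mul_comm T 2]
    exact pow_le_pow_left₀ (Real.exp_pos _).le (aux_exp_le κ hκ) _
  have hcard : (Finset.univ.erase i0).card = d - 1 := by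
    rw [Finset.card_erase_of_mem (Finset.mem_univ _), Finset.card_univ, Fintype.card_fin]
  have hfT : (1/2) * ((d:ℝ) - 1) * μ * (c0^2 * ((1 - 2/κ)^T)^2) ≤ f (w T) := by
    rw [hfval]
    have h1 : ∑ i ∈ Finset.univ.erase i0, μ * (c0^2 * ((1 - 2/κ)^T)^2)
        ≤ ∑ i ∈ Finset.univ.erase i0, D i * (w T i)^2 := by
      apply Finset.sum_le_sum
      intro i hi
      have hi' : i ≠ i0 := Finset.ne_of_mem_erase hi
      rw [hD]; simp only [if_neg hi']
      exact mul_le_mul_of_nonneg_left (hsq i hi') hμ0.le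
    have h2 : ∑ i ∈ Finset.univ.erase i0, D i * (w T i)^2 ≤ ∑ i, D i * (w T i)^2 := by
      apply Finset.sum_le_sum_of_subset_of_nonneg (Finset.erase_subset _ _)
      intro i _ _
      have : 0 ≤ D i := by rw [hD]; dsimp only; split <;> positivity
      positivity
    have hd1 : ((d - 1 : ℕ) : ℝ) = (d:ℝ) - 1 := by
      push_cast [Nat.cast_sub (by omega : 1 ≤ d)]; ring
    simp only [Finset.sum_const, hcard, nsmul_eq_mul, hd1] at h1
    nlinarith [h1.trans h2]
  -- value at 0
  have hf0 : f (w 0) = (1/2) * (L + ((d:ℝ)-1) * μ) * c0^2 := by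
    rw [hfval, hw0]
    have : ∑ i, D i * c0^2 = (L + ((d:ℝ)-1) * μ) * c0^2 := by
      rw [← Finset.sum_mul]
      congr 1
      rw [← Finset.add_sum_erase _ _ (Finset.mem_univ i0), hD]
      simp only [if_pos, if_true, eq_self_iff_true]
      rw [Finset.sum_congr rfl (fun i hi => if_neg (Finset.ne_of_mem_erase hi)),
        Finset.sum_const, hcard]
      have hd1 : ((d - 1 : ℕ) : ℝ) = (d:ℝ) - 1 := by
        push_cast [Nat.cast_sub (by omega : 1 ≤ d)]; ring
      rw [nsmul_eq_mul, hd1]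
    rw [this]; ring
  -- L ≤ (d-1) μ
  have hLle : L ≤ ((d:ℝ)-1) * μ := by
    have h1 : κ ≤ (d:ℝ) - 1 := by linarith
    have h2 : κ * μ = L := by rw [hμ]; field_simp
    nlinarith
  -- conclude
  rw [hfstar, sub_zero, sub_zero, hf0]
  set E := Real.exp (-8 * T / κ) with hE
  have hE0 : 0 < E := Real.exp_pos _
  have hdm : (0:ℝ) ≤ (d:ℝ) - 1 := by linarith
  have hcoef : (0:ℝ) ≤ (1/2) * ((d:ℝ)-1) * μ :=
    mul_nonneg (mul_nonneg (by norm_num) hdm) hμ0.le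
  have key : (L + ((d:ℝ)-1)*μ) * (c0^2*E) ≤ (2*(((d:ℝ)-1)*μ)) * (c0^2*E) := by
    apply mul_le_mul_of_nonneg_right (by linarith) (by positivity)
  have hstep : (1/2) * (L + ((d:ℝ)-1) * μ) * c0^2 / 2 * E
      ≤ (1/2) * ((d:ℝ)-1) * μ * (c0^2 * E) := by
    calc (1/2) * (L + ((d:ℝ)-1) * μ) * c0^2 / 2 * E
        = (L + ((d:ℝ)-1)*μ) * (c0^2*E) / 4 := by ring
      _ ≤ (2*(((d:ℝ)-1)*μ)) * (c0^2*E) / 4 := by linarith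
      _ = (1/2) * ((d:ℝ)-1) * μ * (c0^2 * E) := by ring
  have hstep2 : (1/2) * ((d:ℝ)-1) * μ * (c0^2 * E) ≤
      (1/2) * ((d:ℝ)-1) * μ * (c0^2 * ((1 - 2/κ)^T)^2) :=
    mul_le_mul_of_nonneg_left (mul_le_mul_of_nonneg_left hEs hc02.le) hcoef
  exact le_trans (hstep.trans (hstep2.trans hfT)) le_rfl
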